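/- arXiv:1108.3659 — 3 statements merged into one kernel-verified Lean document; each statement's English description precedes it below -/
import Mathlib

section
/- For every integer n ≥ 2 and all i, j ∈ {1, …, n−1}, deleting the first peak (the leftmost occurrence of the factor rf) gives a bijection from D_n(i,j) onto the disjoint union of the sets D_{n−1}(s,j) for s = i−1, …, n−1; consequently |D_n(i,j)| = Σ_{s=i−1}^{n−1} |D_{n−1}(s,j)|, where D_{n−1}(0,j) := ∅. -/
/-- A Dyck word: a list of booleans (`true` = rise, `false` = fall) with equally many
rises and falls such that every prefix has at least as many rises as falls. -/
def IsDyckWord (w : List Bool) : Prop :=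
  w.count true = w.count false ∧ ∀ p, p <+: w → p.count false ≤ p.count true

/-- The list of heights of the peaks (occurrences of the factor `rf`) of a word,
from left to right. The height of a peak is the number of rises minus the number
of falls in the prefix ending with the rise of that peak. -/
def peakHeights (w : List Bool) : List ℕ :=
  (List.range w.length).filterMap (fun k =>
    if w[k]? = some true ∧ w[k + 1]? = some false then
      some ((w.take (k + 1)).count true - (w.take (k + 1)).count false)
    else none)

/-- `DyckD n i j` is the set of Dyck paths of semilength `n` whose first peak has
height `i` and whose last peak has height `j`. -/
def DyckD (n i j : ℕ) : Set (List Bool) :=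
  {w | IsDyckWord w ∧ w.count true = n ∧
    (peakHeights w).head? = some i ∧ (peakHeights w).getLast? = some j}

/-- The index of the first peak of a word, i.e. the position of the leftmost
occurrence of the factor `rf`. -/
def firstPeakIdx? (w : List Bool) : Option ℕ :=
  (List.range w.length).find? (fun k => (w[k]? == some true) && (w[k + 1]? == some false))

/-- Delete the first peak, i.e. the leftmost occurrence of the factor `rf`. -/
def deleteFirstPeak (w : List Bool) : List Bool :=
  match firstPeakIdx? w with
  | some k => w.take k ++ w.drop (k + 2)
  | none => w

/-! ### auxiliary -/

def zpkF (w : List Bool) (k : ℕ) : Option ℤ :=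
  if w[k]? = some true ∧ w[k + 1]? = some false then
    some (((w.take (k + 1)).count true : ℤ) - ((w.take (k + 1)).count false : ℤ))
  else none

def zpk (w : List Bool) : List ℤ := (List.range w.length).filterMap (zpkF w)

def Nonneg (w : List Bool) : Prop := ∀ p, p <+: w → p.count false ≤ p.count true

def hgt (w : List Bool) : ℤ := (w.count true : ℤ) - (w.count false : ℤ)

lemma getLast?_cons_ne {α : Type*} (x : α) {l : List α} (h : l ≠ []) :
    (x :: l).getLast? = l.getLast? := by
  have h1 : x :: l = [x] ++ l := rfl
  rw [h1, List.getLast?_append]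
  rcases hl : l.getLast? with _ | a
  · exact absurd (List.getLast?_eq_none_iff.mp hl) h
  · rfl

lemma zpk_nil : zpk [] = [] := rfl

lemma zpk_cons (x : Bool) (w : List Bool) :
    zpk (x :: w) = (if x = true ∧ w.head? = some false then [(1:ℤ)] else []) ++
      (zpk w).map (· + (if x then (1:ℤ) else -1)) := by
  unfold zpk
  rw [List.length_cons, List.range_succ_eq_map, List.filterMap_cons, List.filterMap_map]
  have h0 : zpkF (x :: w) 0 = if x = true ∧ w.head? = some false then some 1 else none := by
    unfold zpkF
    have h1 : (x :: w)[0]? = some x := by simp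
    have h2 : (x :: w)[1]? = w[0]? := by simp
    rw [h1, h2, ← List.head?_eq_getElem?]
    by_cases hx : x = true ∧ w.head? = some false
    · rw [if_pos, if_pos hx]
      · obtain ⟨rfl, -⟩ := hx; simp
      · exact ⟨by rw [hx.1], hx.2⟩
    · rw [if_neg, if_neg hx]
      intro ⟨ha, hb⟩; exact hx ⟨by injection ha, hb⟩
  have hs : ∀ k, (zpkF (x :: w) ∘ Nat.succ) k
      = Option.map (· + (if x then (1:ℤ) else -1)) (zpkF w k) := by
    intro k
    show zpkF (x :: w) (k+1) = _
    unfold zpkF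
    have h1 : (x :: w)[k+1]? = w[k]? := by simp
    have h2 : (x :: w)[k+2]? = w[k+1]? := by
      show (x :: w)[(k+1)+1]? = _
      simp
    have h3 : (x :: w).take (k+2) = x :: w.take (k+1) := rfl
    rw [h1, h2, h3]
    by_cases hc : w[k]? = some true ∧ w[k+1]? = some false
    · rw [if_pos hc, if_pos hc]
      simp only [Option.map_some, List.count_cons]
      congr 1
      cases x <;> simp <;> ring
    · rw [if_neg hc, if_neg hc]; rfl
  rw [List.filterMap_congr (fun k _ => hs k), ← List.map_filterMap, h0]
  by_cases hx : x = true ∧ w.head? = some false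
  · rw [if_pos hx, if_pos hx]; rfl
  · rw [if_neg hx, if_neg hx]; rfl

lemma zpk_eq_map {w : List Bool} (h : Nonneg w) :
    zpk w = (peakHeights w).map (Nat.cast) := by
  unfold zpk peakHeights
  rw [List.map_filterMap]
  refine List.filterMap_congr fun k _ => ?_
  unfold zpkF
  split_ifs with hc
  · have hle : (w.take (k+1)).count false ≤ (w.take (k+1)).count true :=
      h _ (List.take_prefix _ _)
    simp [Nat.cast_sub hle]
  · rfl

lemma ph_head_iff {w : List Bool} (h : Nonneg w) (i : ℕ) :
    (peakHeights w).head? = some i ↔ (zpk w).head? = some (i : ℤ) := by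
  rw [zpk_eq_map h, List.head?_map]
  cases hh : (peakHeights w).head? with
  | none => simp
  | some m => simp

lemma ph_getLast_iff {w : List Bool} (h : Nonneg w) (i : ℕ) :
    (peakHeights w).getLast? = some i ↔ (zpk w).getLast? = some (i : ℤ) := by
  rw [zpk_eq_map h, List.getLast?_map]
  cases hh : (peakHeights w).getLast? with
  | none => simp
  | some m => simp

lemma zpk_append (a b : List Bool)
    (h : a.getLast? = some false ∨ b.head? = some true ∨ b = []) :
    zpk (a ++ b) = zpk a ++ (zpk b).map (· + hgt a) := by
  induction a with
  | nil => simp [zpk_nil, hgt]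
  | cons x a' ih =>
    rcases eq_or_ne a' [] with rfl | ha'
    · have hC : ¬ (x = true ∧ b.head? = some false) := by
        rintro ⟨rfl, hb⟩
        rcases h with h | h | h
        · simp at h
        · rw [h] at hb; cases hb
        · subst h; simp at hb
      rw [List.singleton_append, zpk_cons, if_neg hC, List.nil_append]
      have hz : zpk [x] = [] := by
        rw [zpk_cons]; simp [zpk_nil]
      rw [hz, List.nil_append]
      cases x <;> simp [hgt]
    · have hh : (a' ++ b).head? = a'.head? := by
        cases a' with
        | nil => exact absurd rfl ha'
        | cons y t => rfl
      have h' : a'.getLast? = some false ∨ b.head? = some true ∨ b = [] := by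
        rcases h with h | h | h
        · left; rwa [getLast?_cons_ne x ha'] at h
        · right; left; exact h
        · right; right; exact h
      rw [List.cons_append, zpk_cons, hh, ih h', zpk_cons]
      rw [List.map_append, List.append_assoc]
      congr 2
      simp only [List.map_map]
      congr 1
      funext z
      simp only [Function.comp_apply, hgt, List.count_cons]
      cases x <;> simp <;> ring

lemma zpk_replicate_true (t : ℕ) : zpk (List.replicate t true) = [] := by
  induction t with
  | zero => rfl
  | succ t ih =>
    rw [List.replicate_succ, zpk_cons, ih]
    have : (List.replicate t true).head? ≠ some false := by
      cases t <;> simp [List.replicate_succ]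
    simp [this]

lemma zpk_rf (t : ℕ) (ht : 1 ≤ t) :
    zpk (List.replicate t true ++ [false]) = [(t : ℤ)] := by
  induction t with
  | zero => omega
  | succ t ih =>
    rcases Nat.eq_zero_or_pos t with rfl | htp
    · show zpk [true, false] = [1]
      rw [zpk_cons]
      have hz : zpk [false] = [] := by rw [zpk_cons]; simp [zpk_nil]
      simp [hz]
    · rw [List.replicate_succ, List.cons_append, zpk_cons, ih htp]
      have hhd : (List.replicate t true ++ [false]).head? = some true := by
        cases t with
        | zero => omega
        | succ m => simp [List.replicate_succ]
      rw [hhd]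
      simp

lemma zpk_decomp (t : ℕ) (ht : 1 ≤ t) (v : List Bool) :
    zpk (List.replicate t true ++ false :: v)
      = (t : ℤ) :: (zpk v).map (· + ((t : ℤ) - 1)) := by
  have he : List.replicate t true ++ false :: v
      = (List.replicate t true ++ [false]) ++ v := by simp
  rw [he, zpk_append _ _ (Or.inl (by simp)), zpk_rf t ht]
  have hg : hgt (List.replicate t true ++ [false]) = (t : ℤ) - 1 := by
    simp [hgt, List.count_replicate]
  rw [hg]
  rfl

/-! ### Nonneg structure -/

lemma nonneg_rep_iff (t : ℕ) (u : List Bool) :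
    Nonneg (List.replicate t true ++ u)
      ↔ ∀ q, q <+: u → q.count false ≤ t + q.count true := by
  constructor
  · intro h q hq
    obtain ⟨r, hr⟩ := hq
    have := h (List.replicate t true ++ q) ⟨r, by rw [List.append_assoc, hr]⟩
    simpa [List.count_replicate] using this
  · intro h p hp
    rcases List.prefix_or_prefix_of_prefix hp (List.prefix_append _ _) with hp' | hp'
    · have : ∀ b ∈ p, b = true := by
        intro b hb
        have := hp'.sublist.subset hb
        exact List.eq_of_mem_replicate this
      rw [List.eq_replicate_of_mem this]
      simp [List.count_replicate]
    · obtain ⟨q, rfl⟩ := hp'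
      have hq : q <+: u := by
        obtain ⟨r, hr⟩ := hp
        rw [List.append_assoc] at hr
        exact ⟨r, List.append_cancel_left hr⟩
      have := h q hq
      simpa [List.count_replicate] using this

lemma nonneg_step (t : ℕ) (ht : 1 ≤ t) (v : List Bool) :
    Nonneg (List.replicate t true ++ false :: v)
      ↔ Nonneg (List.replicate (t-1) true ++ v) := by
  rw [nonneg_rep_iff, nonneg_rep_iff]
  constructor
  · intro h q hq
    have := h (false :: q) (by rw [List.prefix_cons_iff]; exact Or.inr ⟨q, rfl, hq⟩)
    simp [List.count_cons] at this
    omega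
  · intro h q hq
    rcases List.prefix_cons_iff.mp hq with rfl | ⟨q', rfl, hq'⟩
    · simp
    · have := h q' hq'
      simp [List.count_cons]
      omega

lemma head_true_of_nonneg {w : List Bool} (h : Nonneg w) (hw : w ≠ []) :
    w.head? = some true := by
  cases w with
  | nil => exact absurd rfl hw
  | cons x w' =>
    cases x
    · have := h [false] ⟨w', rfl⟩
      simp at this
    · rfl

lemma struct (w : List Bool) (hf : 1 ≤ w.count false) (hh : w.head? = some true) :
    ∃ t v, 1 ≤ t ∧ w = List.replicate t true ++ false :: v := by
  set a := w.takeWhile (fun x => x) with hadef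
  set d := w.dropWhile (fun x => x) with hddef
  have hw : a ++ d = w := List.takeWhile_append_dropWhile
  have ha : a = List.replicate a.length true := by
    apply List.eq_replicate_of_mem
    intro b hb
    have := List.mem_takeWhile_imp hb
    simpa using this
  have hd : d ≠ [] := by
    intro hdnil
    rw [hdnil, List.append_nil] at hw
    rw [← hw, ha, List.count_replicate] at hf
    simp at hf
  have hdh : d.head hd = false := by
    have := List.head_dropWhile_not (fun x => x) (l := w) (by rw [← hddef]; exact hd)
    simpa using this
  have hdc : d = false :: d.tail := by
    conv_lhs => rw [← List.cons_head_tail hd, hdh]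
  have hal : 1 ≤ a.length := by
    rcases Nat.eq_zero_or_pos a.length with h0 | h1
    · exfalso
      rw [List.length_eq_zero_iff] at h0
      rw [h0, List.nil_append] at hw
      rw [← hw] at hh
      rw [hdc] at hh
      simp at hh
    · exact h1
  refine ⟨a.length, d.tail, hal, ?_⟩
  conv_lhs => rw [← hw, ha]
  rw [← hdc]

/-! ### firstPeakIdx and deleteFirstPeak on the canonical shape -/

lemma getElem?_shape_lt (t : ℕ) (v : List Bool) {k : ℕ} (hk : k < t) :
    (List.replicate t true ++ false :: v)[k]? = some true := by
  rw [List.getElem?_append_left (by simpa using hk)]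
  simp [hk]

lemma getElem?_shape_eq (t : ℕ) (v : List Bool) :
    (List.replicate t true ++ false :: v)[t]? = some false := by
  rw [List.getElem?_append_right (by simp)]
  simp

lemma firstPeakIdx_eq (t : ℕ) (ht : 1 ≤ t) (v : List Bool) :
    firstPeakIdx? (List.replicate t true ++ false :: v) = some (t - 1) := by
  set w := List.replicate t true ++ false :: v with hwdef
  have hlen : w.length = t + (1 + v.length) := by simp [hwdef]; omega
  unfold firstPeakIdx?
  rw [hlen, List.range_add, List.find?_append]
  have h1 : List.find? (fun k => (w[k]? == some true) && (w[k + 1]? == some false))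
      (List.range t) = some (t-1) := by
    have : t = (t - 1) + 1 := by omega
    rw [this, List.range_succ, List.find?_append]
    have hnone : List.find? (fun k => (w[k]? == some true) && (w[k + 1]? == some false))
        (List.range (t-1)) = none := by
      rw [List.find?_eq_none]
      intro k hk
      rw [List.mem_range] at hk
      have h2 : w[k+1]? = some true := getElem?_shape_lt t v (by omega)
      simp [h2]
    rw [hnone]
    have hfound : w[t-1]? = some true := getElem?_shape_lt t v (by omega)
    have hnext : w[(t-1)+1]? = some false := by
      have : (t-1)+1 = t := by omega
      rw [this]; exact getElem?_shape_eq t v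
    simp [hfound, hnext]
  rw [h1]
  rfl

lemma deleteFirstPeak_eq (t : ℕ) (ht : 1 ≤ t) (v : List Bool) :
    deleteFirstPeak (List.replicate t true ++ false :: v)
      = List.replicate (t-1) true ++ v := by
  unfold deleteFirstPeak
  rw [firstPeakIdx_eq t ht v]
  show List.take (t-1) _ ++ List.drop (t-1+2) _ = _
  have h1 : (List.replicate t true ++ false :: v).take (t-1)
      = List.replicate (t-1) true := by
    rw [List.take_append_of_le_length (by simp only [List.length_replicate]; omega), List.take_replicate]
    congr 1
    omega
  have h2 : (List.replicate t true ++ false :: v).drop (t - 1 + 2) = v := by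
    have he : t - 1 + 2 = (List.replicate t true).length + 1 := by simp; omega
    rw [he, List.drop_append]
    simp
  rw [h1, h2]

/-! ### bounds on peak heights -/

lemma zpk_le (w : List Bool) : ∀ z ∈ zpk w, z ≤ (w.count true : ℤ) := by
  intro z hz
  unfold zpk at hz
  obtain ⟨k, hk, hfk⟩ := List.mem_filterMap.mp hz
  unfold zpkF at hfk
  split_ifs at hfk with hc
  · injection hfk with hfk
    subst hfk
    have h1 : (w.take (k+1)).count true ≤ w.count true :=
      (List.take_sublist _ _).count_le _
    have h2 : (0:ℤ) ≤ ((w.take (k+1)).count false : ℤ) := by positivity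
    have := Nat.cast_le (α := ℤ) |>.mpr h1
    omega

lemma zpk_pos {w : List Bool} (h : Nonneg w) : ∀ z ∈ zpk w, 1 ≤ z := by
  intro z hz
  unfold zpk at hz
  obtain ⟨k, hk, hfk⟩ := List.mem_filterMap.mp hz
  unfold zpkF at hfk
  split_ifs at hfk with hc
  · injection hfk with hfk
    subst hfk
    have htk : w.take (k+1) = w.take k ++ [true] := by
      rw [List.take_succ, hc.1]
      rfl
    have hnn : (w.take k).count false ≤ (w.take k).count true :=
      h _ (List.take_prefix _ _)
    rw [htk]
    simp only [List.count_append]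
    have := Nat.cast_le (α := ℤ) |>.mpr hnn
    have h1 : List.count true [true] = 1 := by decide
    have h2 : List.count false [true] = 0 := by decide
    rw [h1, h2]
    push_cast
    omega

lemma eq_of_zpk_nil {v : List Bool} (h : zpk v = []) :
    ∃ a b, v = List.replicate a false ++ List.replicate b true := by
  induction v with
  | nil => exact ⟨0, 0, rfl⟩
  | cons x v' ih =>
    rw [zpk_cons] at h
    rw [List.append_eq_nil_iff] at h
    obtain ⟨h1, h2⟩ := h
    rw [List.map_eq_nil_iff] at h2
    obtain ⟨a, b, rfl⟩ := ih h2
    cases x with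
    | false =>
      exact ⟨a + 1, b, by rw [List.replicate_succ]; rfl⟩
    | true =>
      have ha : a = 0 := by
        by_contra ha
        have : a - 1 + 1 = a := by omega
        rw [← this, List.replicate_succ] at h1
        simp at h1
      subst ha
      exact ⟨0, b + 1, by rw [List.replicate_succ]; rfl⟩

lemma length_eq_counts (w : List Bool) : w.length = w.count true + w.count false := by
  induction w with
  | nil => rfl
  | cons x w' ih =>
    cases x <;> (simp only [List.count_cons, List.length_cons, ih]; simp; omega)

lemma dyckD_finite (n i j : ℕ) : (DyckD n i j).Finite := by
  apply Set.Finite.subset (List.finite_length_eq Bool (2*n))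
  rintro w ⟨⟨hc, -⟩, hn, -, -⟩
  simp only [Set.mem_setOf_eq]
  rw [length_eq_counts]
  omega

lemma ncard_biUnion {α β : Type*} (t : Finset β) (f : β → Set α)
    (hfin : ∀ b ∈ t, (f b).Finite)
    (hdisj : ∀ b ∈ t, ∀ c ∈ t, b ≠ c → Disjoint (f b) (f c)) :
    (⋃ b ∈ t, f b).ncard = ∑ b ∈ t, (f b).ncard := by
  classical
  induction t using Finset.induction with
  | empty => simp
  | @insert a s hnotmem ih =>
    rw [Finset.sum_insert hnotmem]
    have hre : (⋃ b ∈ (insert a s : Finset β), f b) = f a ∪ ⋃ b ∈ s, f b := by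
      simp [Set.biUnion_insert]
    rw [hre]
    have hfs : (⋃ b ∈ s, f b).Finite :=
      Set.Finite.biUnion s.finite_toSet (fun b hb => hfin b (Finset.mem_insert_of_mem hb))
    rw [Set.ncard_union_eq ?_ (hfin a (Finset.mem_insert_self a s)) hfs]
    · rw [ih (fun b hb => hfin b (Finset.mem_insert_of_mem hb))
        (fun b hb c hc => hdisj b (Finset.mem_insert_of_mem hb) c (Finset.mem_insert_of_mem hc))]
    · rw [Set.disjoint_iUnion_right]
      intro b
      rw [Set.disjoint_iUnion_right]
      intro hb
      exact hdisj a (Finset.mem_insert_self a s) b (Finset.mem_insert_of_mem hb)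
        (by rintro rfl; exact hnotmem hb)

/-! ### main structure lemmas -/

lemma count_shape_true (t : ℕ) (v : List Bool) :
    (List.replicate t true ++ false :: v).count true = t + v.count true := by
  simp [List.count_replicate, List.count_cons]

lemma count_shape_false (t : ℕ) (v : List Bool) :
    (List.replicate t true ++ false :: v).count false = 1 + v.count false := by
  simp [List.count_replicate, List.count_cons]
  omega

lemma mem_shape {n i j : ℕ} {w : List Bool} (hn : 1 ≤ n) (hw : w ∈ DyckD n i j) :
    1 ≤ i ∧ ∃ v, w = List.replicate i true ++ false :: v := by
  obtain ⟨⟨hcnt, hN⟩, hT, hhead, hlast⟩ := hw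
  have hN' : Nonneg w := hN
  have hf : 1 ≤ w.count false := by omega
  have hne : w ≠ [] := by
    intro h
    rw [h] at hT
    simp at hT
    omega
  have hh := head_true_of_nonneg hN' hne
  obtain ⟨t, v, ht, rfl⟩ := struct w hf hh
  have hz := zpk_decomp t ht v
  have hih : (zpk (List.replicate t true ++ false :: v)).head? = some (i:ℤ) :=
    (ph_head_iff hN' i).mp hhead
  rw [hz] at hih
  simp only [List.head?_cons, Option.some_inj] at hih
  have : t = i := by exact_mod_cast hih
  subst this
  exact ⟨ht, v, rfl⟩

lemma zpk_v_ne_nil {n i : ℕ} {v : List Bool} (hn : 2 ≤ n) (hi2 : i ≤ n - 1)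
    (hN : Nonneg (List.replicate i true ++ false :: v))
    (hTv : v.count true = n - i) (hFv : v.count false = n - 1) :
    zpk v ≠ [] := by
  intro h0
  obtain ⟨a, b, rfl⟩ := eq_of_zpk_nil h0
  have hTv' : b = n - i := by
    simpa [List.count_replicate] using hTv
  have hFv' : a = n - 1 := by
    simpa [List.count_replicate] using hFv
  have hq := (nonneg_rep_iff i _).mp hN
  rcases Nat.eq_zero_or_pos b with hb | hb
  · omega
  · have hpre : (false :: List.replicate a false) <+: (false :: (List.replicate a false ++ List.replicate b true)) := by
      rw [List.prefix_cons_iff]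
      exact Or.inr ⟨_, rfl, List.prefix_append _ _⟩
    have := hq _ hpre
    simp [List.count_cons, List.count_replicate] at this
    omega

lemma forward {n i j : ℕ} (hn : 2 ≤ n) (hi1 : 1 ≤ i) (hi2 : i ≤ n - 1) {v : List Bool}
    (hw : (List.replicate i true ++ false :: v) ∈ DyckD n i j) :
    ∃ s, (i - 1 ≤ s ∧ s ≤ n - 1) ∧
      (List.replicate (i-1) true ++ v) ∈ DyckD (n-1) s j := by
  obtain ⟨⟨hcnt, hN⟩, hT, hhead, hlast⟩ := hw
  have hN' : Nonneg (List.replicate i true ++ false :: v) := hN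
  rw [count_shape_true] at hT
  rw [count_shape_true, count_shape_false] at hcnt
  have hTv : v.count true = n - i := by omega
  have hFv : v.count false = n - 1 := by omega
  have hNw' : Nonneg (List.replicate (i-1) true ++ v) := (nonneg_step i hi1 v).mp hN'
  have hcT : (List.replicate (i-1) true ++ v).count true = n - 1 := by
    simp [List.count_replicate]
    omega
  have hcF : (List.replicate (i-1) true ++ v).count false = n - 1 := by
    simp [List.count_replicate]
    omega
  have hzw := zpk_decomp i hi1 v
  have hlz : (zpk (List.replicate i true ++ false :: v)).getLast? = some (j:ℤ) :=
    (ph_getLast_iff hN' j).mp hlast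
  rw [hzw] at hlz
  have hzv : zpk v ≠ [] := zpk_v_ne_nil hn hi2 hN' hTv hFv
  have hL : (zpk v).map (· + ((i:ℤ) - 1)) ≠ [] := by
    simpa using hzv
  rw [getLast?_cons_ne _ hL] at hlz
  have hvne : v ≠ [] := by
    intro h; rw [h] at hzv; exact hzv zpk_nil
  cases hv : v.head? with
  | none => rw [List.head?_eq_none_iff] at hv; exact absurd hv hvne
  | some x =>
    cases x with
    | true =>
      -- v starts with a rise
      obtain ⟨c, v₃, hc, hveq⟩ := struct v (by omega) hv
      have hgteq : hgt (List.replicate (i-1) true) = (i:ℤ) - 1 := by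
        simp [hgt, List.count_replicate]
        omega
      have hzw' : zpk (List.replicate (i-1) true ++ v)
          = (zpk v).map (· + ((i:ℤ) - 1)) := by
        rw [zpk_append _ _ (Or.inr (Or.inl hv)), zpk_replicate_true, hgteq]
        rfl
      have hzvdec := zpk_decomp c hc v₃
      refine ⟨i - 1 + c, ⟨by omega, ?_⟩, ?_, ?_, ?_, ?_⟩
      · -- bound s ≤ n - 1
        have hmem : ((c:ℤ) + ((i:ℤ)-1)) ∈ zpk (List.replicate (i-1) true ++ v) := by
          rw [hzw', hveq, hzvdec]
          simp
        have := zpk_le _ _ hmem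
        rw [hcT] at this
        omega
      · exact ⟨by rw [hcT, hcF], hNw'⟩
      · exact hcT
      · rw [ph_head_iff hNw', hzw', hveq, hzvdec]
        simp only [List.map_cons, List.head?_cons, Option.some_inj]
        push_cast [hi1]
        ring
      · rw [ph_getLast_iff hNw', hzw']
        exact hlz
    | false =>
      -- v starts with a fall
      have hvc : v = false :: v.tail := by
        cases v with
        | nil => exact absurd rfl hvne
        | cons y t => injection hv with hv; subst hv; rfl
      have hi2' : 2 ≤ i := by
        by_contra hi1'
        have : i = 1 := by omega
        subst this
        have := hNw' [false] (by
          rw [hvc]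
          exact ⟨v.tail, rfl⟩)
        simp at this
      have hzw'dec := zpk_decomp (i-1) (by omega) v.tail
      have hLM : (zpk v).map (· + ((i:ℤ) - 1))
          = (zpk v.tail).map (· + (((i-1:ℕ):ℤ) - 1)) := by
        conv_lhs => rw [hvc]
        rw [zpk_cons]
        simp only [Bool.false_eq_true, false_and, if_false, List.nil_append, List.map_map]
        congr 1
        funext z
        simp only [Function.comp_apply]
        push_cast [hi1]
        ring
      refine ⟨i - 1, ⟨le_refl _, by omega⟩, ⟨by rw [hcT, hcF], hNw'⟩, hcT, ?_, ?_⟩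
      · rw [ph_head_iff hNw']
        conv_lhs => rw [hvc]
        rw [hzw'dec]
        rfl
      · rw [ph_getLast_iff hNw']
        conv_lhs => rw [hvc]
        rw [hzw'dec, getLast?_cons_ne _ (by rw [← hLM]; exact hL), ← hLM]
        exact hlz

lemma backward {n i j s : ℕ} (hn : 2 ≤ n) (hi1 : 1 ≤ i) (hi2 : i ≤ n - 1)
    (hs1 : i - 1 ≤ s) (hs2 : s ≤ n - 1) {u : List Bool} (hu : u ∈ DyckD (n-1) s j) :
    ∃ v, u = List.replicate (i-1) true ++ v ∧
      (List.replicate i true ++ false :: v) ∈ DyckD n i j := by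
  obtain ⟨hs1', v₃, rfl⟩ := mem_shape (n := n-1) (by omega) hu
  obtain ⟨⟨hcnt, hN⟩, hT, hhead, hlast⟩ := hu
  have hN' : Nonneg (List.replicate s true ++ false :: v₃) := hN
  rw [count_shape_true] at hT
  rw [count_shape_true, count_shape_false] at hcnt
  set v : List Bool := List.replicate (s - (i-1)) true ++ false :: v₃ with hvdef
  have huv : List.replicate s true ++ false :: v₃ = List.replicate (i-1) true ++ v := by
    rw [hvdef, ← List.append_assoc, ← List.replicate_add]
    congr 2
    omega
  refine ⟨v, huv, ?_⟩
  have hNw : Nonneg (List.replicate i true ++ false :: v) := by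
    rw [nonneg_step i hi1 v, ← huv]
    exact hN'
  have hTv : v.count true = (s - (i-1)) + v₃.count true := by
    simp [hvdef, List.count_replicate, List.count_cons]
  have hFv : v.count false = 1 + v₃.count false := by
    simp [hvdef, List.count_replicate, List.count_cons]
    omega
  have hcTw : (List.replicate i true ++ false :: v).count true = n := by
    rw [count_shape_true, hTv]
    omega
  have hcFw : (List.replicate i true ++ false :: v).count false = n := by
    rw [count_shape_false, hFv]
    omega
  have hzw := zpk_decomp i hi1 v
  have hzu := zpk_decomp s (by omega) v₃
  have hlz : (zpk (List.replicate s true ++ false :: v₃)).getLast? = some (j:ℤ) :=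
    (ph_getLast_iff hN' j).mp hlast
  rw [hzu] at hlz
  refine ⟨⟨by rw [hcTw, hcFw], hNw⟩, hcTw, ?_, ?_⟩
  · rw [ph_head_iff hNw, hzw]
    rfl
  · rw [ph_getLast_iff hNw, hzw]
    rcases Nat.lt_or_ge (i-1) s with hcase | hcase
    · -- s ≥ i : v starts with a rise
      have ht' : 1 ≤ s - (i-1) := by omega
      have hzv : zpk v = ((s - (i-1) : ℕ):ℤ) :: (zpk v₃).map (· + (((s - (i-1):ℕ):ℤ) - 1)) := by
        rw [hvdef]
        exact zpk_decomp _ ht' v₃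
      have hcast : ((s - (i-1) : ℕ) : ℤ) = (s:ℤ) - ((i:ℤ) - 1) := by omega
      have hLzu : (zpk v).map (· + ((i:ℤ) - 1)) = (s:ℤ) :: (zpk v₃).map (· + ((s:ℤ) - 1)) := by
        rw [hzv]
        simp only [List.map_cons, List.map_map]
        congr 1
        · rw [hcast]; ring
        · congr 1
          funext z
          simp only [Function.comp_apply]
          rw [hcast]
          ring
      rw [hLzu, getLast?_cons_ne _ (List.cons_ne_nil _ _)]
      exact hlz
    · -- s = i - 1 : v starts with a fall
      have hse : s = i - 1 := by omega
      have hv0 : v = false :: v₃ := by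
        rw [hvdef, hse]
        simp
      have hzv : zpk v = (zpk v₃).map (· + (-1 : ℤ)) := by
        rw [hv0, zpk_cons]
        simp
      have hMne : zpk v₃ ≠ [] := by
        intro h0
        obtain ⟨a, b, rfl⟩ := eq_of_zpk_nil h0
        have hTv3 : (List.replicate a false ++ List.replicate b true).count true = b := by
          simp [List.count_replicate]
        have hFv3 : (List.replicate a false ++ List.replicate b true).count false = a := by
          simp [List.count_replicate]
        have hq := (nonneg_rep_iff s _).mp hN'
        rcases Nat.eq_zero_or_pos b with hb | hb
        · omega
        · have hpre : (false :: List.replicate a false)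
              <+: (false :: (List.replicate a false ++ List.replicate b true)) := by
            rw [List.prefix_cons_iff]
            exact Or.inr ⟨_, rfl, List.prefix_append _ _⟩
          have := hq _ hpre
          simp [List.count_cons, List.count_replicate] at this
          omega
      have hLM : (zpk v).map (· + ((i:ℤ) - 1)) = (zpk v₃).map (· + ((s:ℤ) - 1)) := by
        rw [hzv, List.map_map]
        congr 1
        funext z
        simp only [Function.comp_apply]
        rw [hse]
        push_cast [hi1]
        ring
      rw [hLM]
      rw [getLast?_cons_ne _ (by simpa using hMne)]
      rwa [getLast?_cons_ne _ (by simpa using hMne)] at hlz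

/-- For `n ≥ 2` and `i, j ∈ {1, …, n−1}`, deleting the first peak is a
bijection from `D_n(i,j)` onto `⋃_{s=i−1}^{n−1} D_{n−1}(s,j)`; consequently
`|D_n(i,j)| = Σ_{s=i−1}^{n−1} |D_{n−1}(s,j)|` (the set `D_{n−1}(0,j)` being empty). -/
theorem deleteFirstPeak_bijOn_and_card (n : ℕ) (hn : 2 ≤ n) (i j : ℕ)
    (hi : i ∈ Finset.Icc 1 (n - 1)) (hj : j ∈ Finset.Icc 1 (n - 1)) :
    Set.BijOn deleteFirstPeak (DyckD n i j)
      (⋃ s ∈ Finset.Icc (i - 1) (n - 1), DyckD (n - 1) s j) ∧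
    (DyckD n i j).ncard = ∑ s ∈ Finset.Icc (i - 1) (n - 1), (DyckD (n - 1) s j).ncard := by
  rw [Finset.mem_Icc] at hi
  obtain ⟨hi1, hi2⟩ := hi
  have hmaps : Set.MapsTo deleteFirstPeak (DyckD n i j)
      (⋃ s ∈ Finset.Icc (i - 1) (n - 1), DyckD (n - 1) s j) := by
    intro w hw
    obtain ⟨-, v, rfl⟩ := mem_shape (by omega) hw
    obtain ⟨s, ⟨hs1, hs2⟩, hmem⟩ := forward hn hi1 hi2 hw
    rw [deleteFirstPeak_eq i hi1 v]
    exact Set.mem_biUnion (Finset.mem_Icc.mpr ⟨hs1, hs2⟩) hmem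
  have hinj : Set.InjOn deleteFirstPeak (DyckD n i j) := by
    intro w₁ h₁ w₂ h₂ heq
    obtain ⟨-, v₁, rfl⟩ := mem_shape (by omega) h₁
    obtain ⟨-, v₂, rfl⟩ := mem_shape (by omega) h₂
    rw [deleteFirstPeak_eq i hi1 v₁, deleteFirstPeak_eq i hi1 v₂] at heq
    have hv : v₁ = v₂ := List.append_cancel_left heq
    rw [hv]
  have hsurj : Set.SurjOn deleteFirstPeak (DyckD n i j)
      (⋃ s ∈ Finset.Icc (i - 1) (n - 1), DyckD (n - 1) s j) := by
    intro u hu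
    simp only [Set.mem_iUnion, Finset.mem_Icc] at hu
    obtain ⟨s, ⟨hs1, hs2⟩, hmem⟩ := hu
    obtain ⟨v, huv, hwmem⟩ := backward hn hi1 hi2 hs1 hs2 hmem
    exact ⟨_, hwmem, by rw [deleteFirstPeak_eq i hi1 v, ← huv]⟩
  have hbij : Set.BijOn deleteFirstPeak (DyckD n i j)
      (⋃ s ∈ Finset.Icc (i - 1) (n - 1), DyckD (n - 1) s j) := ⟨hmaps, hinj, hsurj⟩
  refine ⟨hbij, ?_⟩
  have h1 : (DyckD n i j).ncard
      = (⋃ s ∈ Finset.Icc (i - 1) (n - 1), DyckD (n - 1) s j).ncard := by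
    rw [← hbij.image_eq, Set.ncard_image_of_injOn hinj]
  rw [h1]
  apply ncard_biUnion
  · intro b _
    exact dyckD_finite _ _ _
  · intro b _ c _ hbc
    rw [Set.disjoint_left]
    intro w hwb hwc
    apply hbc
    have hb1 := hwb.2.2.1
    have hc1 := hwc.2.2.1
    rw [hb1] at hc1
    injection hc1
end

section
/- For every integer n ≥ 1 the matrix C_n is symmetric, i.e. c^{(n)}_{i,j} = c^{(n)}_{j,i} for all i, j ∈ {1, …, n}. -/
def cMat : ℕ → ℕ → ℕ → ℕ
  | 0, _, _ => 0
  | 1, i, j => if i = 1 ∧ j = 1 then 1 else 0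
  | n + 2, i, j =>
      if 1 ≤ i ∧ i ≤ n + 1 ∧ 1 ≤ j ∧ j ≤ n + 1 then
        ∑ s ∈ Finset.Icc (i - 1) (n + 1), cMat (n + 1) s j
      else if i = n + 2 ∧ j = n + 2 then 1 else 0

def S (n i j : ℕ) : ℕ := ∑ s ∈ Finset.Icc i n, cMat n s j

lemma cMat_succ {m : ℕ} (hm : 1 ≤ m) (i j : ℕ) :
    cMat (m + 1) i j =
      if 1 ≤ i ∧ i ≤ m ∧ 1 ≤ j ∧ j ≤ m then S m (i - 1) j
      else if i = m + 1 ∧ j = m + 1 then 1 else 0 := by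
  obtain ⟨k, rfl⟩ : ∃ k, m = k + 1 := ⟨m - 1, by omega⟩
  rfl

lemma cMat_left_zero (n j : ℕ) : cMat n 0 j = 0 := by
  match n with
  | 0 => rfl
  | 1 => simp [cMat]
  | n + 2 => simp [cMat]

lemma cMat_right_zero (n i : ℕ) : cMat n i 0 = 0 := by
  match n with
  | 0 => rfl
  | 1 => simp [cMat]
  | n + 2 => simp [cMat]

lemma S_right_zero (n i : ℕ) : S n i 0 = 0 := by
  simp [S, cMat_right_zero]

lemma S_zero (n j : ℕ) : S n 0 j = S n 1 j := by
  unfold S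
  rw [← Finset.sum_subset (Finset.Icc_subset_Icc_left (Nat.zero_le 1))]
  intro x hx hx'
  simp only [Finset.mem_Icc] at hx hx'
  have : x = 0 := by omega
  subst this
  exact cMat_left_zero n j

lemma cMat_main (m : ℕ) :
    (∀ i j, cMat m i j = cMat m j i) ∧
    (∀ j, 1 ≤ j → j ≤ m → S m (m - 1) j = 1) ∧
    (∀ i j, 1 ≤ i → i ≤ m → 1 ≤ j → j ≤ m → S m (i - 1) j = S m (j - 1) i) := by
  induction m with
  | zero =>
    refine ⟨fun i j => by simp [cMat], fun j h1 h2 => by omega,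
      fun i j h1 h2 _ _ => by omega⟩
  | succ m ih =>
    rcases Nat.eq_zero_or_pos m with rfl | hm
    · refine ⟨fun i j => by simp [cMat, and_comm], ?_, ?_⟩
      · intro j h1 h2
        have : j = 1 := by omega
        subst this
        decide
      · intro i j h1 h2 h3 h4
        have : i = 1 := by omega
        have hj : j = 1 := by omega
        subst this; subst hj; rfl
    obtain ⟨L1m, L3m, Km⟩ := ih
    -- step A : expressing tail sums of cMat (m+1) columns in terms of S m
    have stepA : ∀ i j, 1 ≤ i → i ≤ m → 1 ≤ j → j ≤ m →
        S (m + 1) (i - 1) j = ∑ s ∈ Finset.Icc (max (i - 1) 1) m, S m (s - 1) j := by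
      intro i j hi him hj hjm
      show (∑ s ∈ Finset.Icc (i - 1) (m + 1), cMat (m + 1) s j) = _
      rw [← Finset.sum_subset (show Finset.Icc (max (i-1) 1) m ⊆ Finset.Icc (i-1) (m+1) by
            apply Finset.Icc_subset_Icc <;> omega)]
      · refine Finset.sum_congr rfl fun s hs => ?_
        simp only [Finset.mem_Icc] at hs
        rw [cMat_succ hm, if_pos ⟨by omega, by omega, hj, hjm⟩]
      · intro x hx hx'
        simp only [Finset.mem_Icc] at hx hx'
        have hx0 : x = 0 ∨ x = m + 1 := by omega
        rcases hx0 with rfl | rfl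
        · exact cMat_left_zero _ _
        · rw [cMat_succ hm]
          split_ifs <;> omega
    -- the symmetric chain
    have chain : ∀ i j, 1 ≤ i → i ≤ m → 1 ≤ j → j ≤ m →
        (∑ s ∈ Finset.Icc (max (i - 1) 1) m, S m (s - 1) j) =
        ∑ t ∈ Finset.Icc (max (j - 1) 1) m, S m (t - 1) i := by
      intro i j hi him hj hjm
      calc (∑ s ∈ Finset.Icc (max (i - 1) 1) m, S m (s - 1) j)
          = ∑ s ∈ Finset.Icc (max (i - 1) 1) m, S m (j - 1) s := by
            refine Finset.sum_congr rfl fun s hs => ?_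
            simp only [Finset.mem_Icc] at hs
            exact Km s j (by omega) (by omega) hj hjm
        _ = ∑ s ∈ Finset.Icc (max (i - 1) 1) m, ∑ t ∈ Finset.Icc (j - 1) m, cMat m t s := rfl
        _ = ∑ t ∈ Finset.Icc (j - 1) m, ∑ s ∈ Finset.Icc (max (i - 1) 1) m, cMat m t s :=
            Finset.sum_comm
        _ = ∑ t ∈ Finset.Icc (j - 1) m, S m (max (i - 1) 1) t := by
            refine Finset.sum_congr rfl fun t _ => Finset.sum_congr rfl fun s _ => L1m t s
        _ = ∑ t ∈ Finset.Icc (max (j - 1) 1) m, S m (max (i - 1) 1) t := by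
            rw [← Finset.sum_subset (show Finset.Icc (max (j-1) 1) m ⊆ Finset.Icc (j-1) m by
                  apply Finset.Icc_subset_Icc <;> omega)]
            intro x hx hx'
            simp only [Finset.mem_Icc] at hx hx'
            have : x = 0 := by omega
            subst this
            exact S_right_zero m _
        _ = ∑ t ∈ Finset.Icc (max (j - 1) 1) m, S m (i - 1) t := by
            refine Finset.sum_congr rfl fun t _ => ?_
            rcases Nat.eq_or_lt_of_le hi with h1 | h1
            · rw [← h1]; simpa using (S_zero m t).symm
            · congr 1; omega
        _ = ∑ t ∈ Finset.Icc (max (j - 1) 1) m, S m (t - 1) i := by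
            refine Finset.sum_congr rfl fun t ht => ?_
            simp only [Finset.mem_Icc] at ht
            exact Km i t hi him (by omega) (by omega)
    -- corner column sums
    have corner : ∀ i, i ≤ m + 1 → S (m + 1) (i - 1) (m + 1) = 1 := by
      intro i hi
      show (∑ s ∈ Finset.Icc (i - 1) (m + 1), cMat (m + 1) s (m + 1)) = 1
      rw [Finset.sum_eq_single_of_mem (m + 1) (by simp [Finset.mem_Icc]; omega)]
      · rw [cMat_succ hm]
        split_ifs <;> omega
      · intro b _ hb
        rw [cMat_succ hm]
        split_ifs <;> omega
    -- L3 at m+1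
    have L3new : ∀ j, 1 ≤ j → j ≤ m + 1 → S (m + 1) (m + 1 - 1) j = 1 := by
      intro j hj hjm
      rcases Nat.eq_or_lt_of_le hjm with rfl | hjm'
      · exact corner (m + 1) le_rfl
      · have hjm2 : j ≤ m := by omega
        show (∑ s ∈ Finset.Icc (m + 1 - 1) (m + 1), cMat (m + 1) s j) = 1
        have : Finset.Icc (m + 1 - 1) (m + 1) = {m, m + 1} := by
          rw [Nat.add_sub_cancel]
          ext x; simp [Finset.mem_Icc]; omega
        rw [this, Finset.sum_pair (by omega)]
        have h1 : cMat (m + 1) m j = 1 := by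
          rw [cMat_succ hm, if_pos ⟨hm, le_rfl, hj, hjm2⟩]
          exact L3m j hj hjm2
        have h2 : cMat (m + 1) (m + 1) j = 0 := by
          rw [cMat_succ hm]; split_ifs <;> omega
        omega
    refine ⟨?_, L3new, ?_⟩
    · -- symmetry at m+1
      intro i j
      rw [cMat_succ hm, cMat_succ hm]
      split_ifs with h1 h2 h3 h4 h5 <;>
        first
          | exact Km i j h1.1 h1.2.1 h1.2.2.1 h1.2.2.2
          | rfl
          | omega
    · -- K at m+1
      intro i j hi him hj hjm
      by_cases hi' : i ≤ m <;> by_cases hj' : j ≤ m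
      · rw [stepA i j hi hi' hj hj', stepA j i hj hj' hi hi']
        exact chain i j hi hi' hj hj'
      · have : j = m + 1 := by omega
        subst this
        rw [corner i him, L3new i hi him]
      · have : i = m + 1 := by omega
        subst this
        rw [corner j hjm, L3new j hj hjm]
      · have h1 : i = m + 1 := by omega
        have h2 : j = m + 1 := by omega
        subst h1; subst h2; rfl

/-- For every `n ≥ 1` the matrix `C_n` is symmetric:
`c^{(n)}_{i,j} = c^{(n)}_{j,i}` for all `i, j ∈ {1, …, n}`. -/
theorem cMat_symm (n : ℕ) (hn : 1 ≤ n) (i j : ℕ)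
    (hi : i ∈ Finset.Icc 1 n) (hj : j ∈ Finset.Icc 1 n) :
    cMat n i j = cMat n j i := (cMat_main n).1 i j
end

section
/- For every integer n ≥ 2 and all i, j ∈ {1, …, n−1}, the entries of the matrix C_n are given explicitly by c^{(n)}_{i,j} = binom((n−1−i)+(n−1−j), n−1−i) − binom((n−1−i)+(n−1−j), n−i−j−1), where binom(m, k) := 0 whenever k < 0. -/
lemma cMat_succ_succ (n i j : ℕ) (h : 1 ≤ i ∧ i ≤ n+1 ∧ 1 ≤ j ∧ j ≤ n+1) :
    cMat (n+2) i j = ∑ s ∈ Finset.Icc (i-1) (n+1), cMat (n+1) s j := by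
  rw [cMat, if_pos h]

lemma cMat_zero_left : ∀ n j, cMat n 0 j = 0
  | 0, _ => rfl
  | 1, j => by simp [cMat]
  | (n+2), j => by rw [cMat, if_neg (by omega), if_neg (by omega)]

lemma cMat_top (m j : ℕ) (hj : j ≤ m) : cMat (m+1) (m+1) j = 0 := by
  match m with
  | 0 => interval_cases j; simp [cMat]
  | (k+1) => rw [cMat, if_neg (by omega), if_neg (by omega)]

/-- reflection of a sum over an interval -/
lemma sum_Icc_reflect {M : Type*} [AddCommMonoid M] (f : ℕ → M) (lo hi c : ℕ)
    (hhi : hi ≤ c) (hlo : lo ≤ hi) :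
    ∑ s ∈ Finset.Icc lo hi, f (c - s) = ∑ u ∈ Finset.Icc (c - hi) (c - lo), f u := by
  refine Finset.sum_nbij' (fun s => c - s) (fun u => c - u) ?_ ?_ ?_ ?_ ?_ <;>
    intro x hx <;> simp only [Finset.mem_Icc] at * <;> omega

lemma sum_choose_Icc_shift (b k M : ℕ) (h : b ≤ k) :
    ∑ u ∈ Finset.Icc b M, Nat.choose u k = Nat.choose (M+1) (k+1) := by
  rw [← Nat.sum_Icc_choose M k]
  refine (Finset.sum_subset (Finset.Icc_subset_Icc_left h) ?_).symm
  intro x hx hnx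
  simp only [Finset.mem_Icc] at hx hnx
  exact Nat.choose_eq_zero_of_lt (by omega)

lemma cMat_key : ∀ n i j a b : ℕ, 1 ≤ i → 1 ≤ j → i + a + 1 = n → j + b + 1 = n →
    (cMat n i j : ℤ) = ((a+b).choose a : ℤ) - ((a+b).choose (i+a) : ℤ) := by
  intro n
  induction n using Nat.strong_induction_on with
  | _ n IH =>
  intro i j a b hi hj hia hjb
  obtain ⟨m, rfl⟩ : ∃ m, n = m + 2 := ⟨n - 2, by omega⟩
  rw [cMat_succ_succ m i j (by omega)]
  match m with
  | 0 =>
    -- n = 2, i = j = 1, a = b = 0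
    obtain rfl : i = 1 := by omega
    obtain rfl : j = 1 := by omega
    obtain rfl : a = 0 := by omega
    obtain rfl : b = 0 := by omega
    simp [cMat]
  | (k+1) =>
    -- n = k + 3
    rcases Nat.eq_zero_or_pos b with rfl | hb
    · -- j = k + 2, last column
      obtain rfl : j = k + 2 := by omega
      have hterm : ∀ s, cMat (k+2) s (k+2) = if s = k+2 then 1 else 0 := by
        intro s
        rw [cMat, if_neg (by omega)]
        by_cases h : s = k + 2 <;> simp [h]
      simp only [hterm]
      rw [Finset.sum_ite_eq' (Finset.Icc (i-1) (k+2)) (k+2) (fun _ => 1)]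
      rw [if_pos (by simp [Finset.mem_Icc]; omega)]
      have h1 : i + a = k + 2 := by omega
      have h2 : a.choose (i+a) = 0 := Nat.choose_eq_zero_of_lt (by omega)
      simp [h2]
    · -- b = b' + 1
      obtain ⟨b', rfl⟩ : ∃ b', b = b' + 1 := ⟨b - 1, by omega⟩
      have hjb' : j + b' = k + 1 := by omega
      -- split off top term s = k+2, which is 0
      push_cast
      rw [Finset.sum_Icc_succ_top (by omega : i - 1 ≤ (k+1)+1)]
      rw [cMat_top (k+1) j (by omega)]
      push_cast
      rw [add_zero]
      -- rewrite each remaining term via IH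
      have hcongr : ∀ s ∈ Finset.Icc (i-1) (k+1),
          (cMat (k+2) s j : ℤ) =
            (((k+1-s)+b').choose (k+1-s) : ℤ) - (((k+1-s)+b').choose (k+1) : ℤ) := by
        intro s hs
        simp only [Finset.mem_Icc] at hs
        rcases Nat.eq_zero_or_pos s with rfl | hs1
        · rw [cMat_zero_left]
          simp
        · have := IH (k+2) (by omega) s j (k+1-s) b' hs1 hj (by omega) (by omega)
          rw [this]
          have h4 : s + (k+1-s) = k+1 := by omega
          rw [h4]
      rw [Finset.sum_congr rfl hcongr]
      rw [Finset.sum_sub_distrib]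
      -- first sum
      have hS1 : ∑ s ∈ Finset.Icc (i-1) (k+1), ((((k+1-s)+b').choose (k+1-s) : ℕ) : ℤ)
          = (((a + (b'+1)).choose (b'+1) : ℕ) : ℤ) := by
        have e1 : ∀ s ∈ Finset.Icc (i-1) (k+1),
            ((((k+1-s)+b').choose (k+1-s) : ℕ) : ℤ)
              = (fun u => ((Nat.choose u b' : ℕ) : ℤ)) ((k+1+b') - s) := by
          intro s hs
          simp only [Finset.mem_Icc] at hs
          have h1 : (k+1-s)+b' = k+1+b'-s := by omega
          have h2 : k+1-s = (k+1+b'-s) - b' := by omega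
          rw [h1, h2, Nat.choose_symm (by omega)]
        rw [Finset.sum_congr rfl e1,
          sum_Icc_reflect (fun u => ((Nat.choose u b' : ℕ) : ℤ)) (i-1) (k+1) (k+1+b') (by omega) (by omega)]
        have h3 : k+1+b'-(k+1) = b' := by omega
        rw [h3, ← Nat.cast_sum]
        norm_cast
        rw [sum_choose_Icc_shift b' b' (k+1+b'-(i-1)) le_rfl]
        congr 1
        omega
      -- second sum
      have hS2 : ∑ s ∈ Finset.Icc (i-1) (k+1), ((((k+1-s)+b').choose (k+1) : ℕ) : ℤ)
          = (((a + (b'+1)).choose (i+a) : ℕ) : ℤ) := by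
        have e1 : ∀ s ∈ Finset.Icc (i-1) (k+1),
            ((((k+1-s)+b').choose (k+1) : ℕ) : ℤ)
              = (fun u => ((Nat.choose u (k+1) : ℕ) : ℤ)) ((k+1+b') - s) := by
          intro s hs
          simp only [Finset.mem_Icc] at hs
          have h1 : (k+1-s)+b' = k+1+b'-s := by omega
          rw [h1]
        rw [Finset.sum_congr rfl e1,
          sum_Icc_reflect (fun u => ((Nat.choose u (k+1) : ℕ) : ℤ)) (i-1) (k+1) (k+1+b') (by omega) (by omega)]
        have h3 : k+1+b'-(k+1) = b' := by omega
        rw [h3, ← Nat.cast_sum]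
        norm_cast
        rw [sum_choose_Icc_shift b' (k+1) (k+1+b'-(i-1)) (by omega)]
        congr 1 <;> omega
      rw [hS1, hS2]
      have h5 : (a + (b'+1)).choose (b'+1) = (a+(b'+1)).choose a := by
        rw [add_comm a (b'+1)]; exact Nat.choose_symm_add
      rw [h5]

/-- For `n ≥ 2` and `i, j ∈ {1, …, n−1}`:
`c^{(n)}_{i,j} = binom((n−1−i)+(n−1−j), n−1−i) − binom((n−1−i)+(n−1−j), n−i−j−1)`,
with the convention that the second binomial coefficient is `0` when `n−i−j−1 < 0`. -/
theorem cMat_explicit_formula (n : ℕ) (hn : 2 ≤ n) (i j : ℕ)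
    (hi : i ∈ Finset.Icc 1 (n - 1)) (hj : j ∈ Finset.Icc 1 (n - 1)) :
    (cMat n i j : ℤ) =
      (Nat.choose ((n - 1 - i) + (n - 1 - j)) (n - 1 - i) : ℤ) -
        (if (n : ℤ) - i - j - 1 < 0 then 0
         else (Nat.choose ((n - 1 - i) + (n - 1 - j)) (n - i - j - 1) : ℤ)) := by
  simp only [Finset.mem_Icc] at hi hj
  have key := cMat_key n i j (n-1-i) (n-1-j) hi.1 hj.1 (by omega) (by omega)
  rw [key]
  have hia : i + (n-1-i) = n - 1 := by omega
  rw [hia]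
  congr 1
  by_cases h : (n : ℤ) - i - j - 1 < 0
  · rw [if_pos h]
    have : (n-1-i) + (n-1-j) < n - 1 := by omega
    rw [Nat.choose_eq_zero_of_lt this]
    simp
  · rw [if_neg h]
    have h1 : n - 1 ≤ (n-1-i) + (n-1-j) := by omega
    have h2 : n - i - j - 1 = ((n-1-i) + (n-1-j)) - (n - 1) := by omega
    rw [h2, Nat.choose_symm h1]
end
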